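/- Quadrature satisfies B(p): Let t ∈ ℝⁿ, t₀, t_f ∈ ℝ, h = t_f − t₀ ≠ 0, c = (t − t₀𝟙)/h, and w ∈ ℝⁿ a quadrature rule satisfying wᵀ t^k = (t_f^{k+1} − t₀^{k+1})/(k+1) for all 0 ≤ k ≤ τ−1. Define b = w/h. Then bᵀ c^{j−1} = 1/j for all 1 ≤ j ≤ τ. -/

import Mathlib

open Matrix

lemma gsbp_aux_sum (p : ℕ) (t0 tf : ℝ) :
    ∑ m ∈ Finset.range (p + 1),
        ((tf ^ (m + 1) - t0 ^ (m + 1)) / (m + 1)) * ((-t0) ^ (p - m) * (p.choose m : ℝ))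
      = (tf - t0) ^ (p + 1) / (p + 1) := by
  have h1 : ∀ m ∈ Finset.range (p + 1),
      ((tf ^ (m + 1) - t0 ^ (m + 1)) / (m + 1) : ℝ) * ((-t0) ^ (p - m) * (p.choose m : ℝ))
        = ∫ x in t0..tf, x ^ m * ((-t0) ^ (p - m) * (p.choose m : ℝ)) := by
    intro m _
    rw [intervalIntegral.integral_mul_const, integral_pow]
  rw [Finset.sum_congr rfl h1, ← intervalIntegral.integral_finset_sum]
  · have h2 : ∀ x : ℝ,
        ∑ m ∈ Finset.range (p + 1), x ^ m * ((-t0) ^ (p - m) * (p.choose m : ℝ))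
          = (x - t0) ^ p := by
      intro x
      rw [sub_eq_add_neg, add_pow]
      exact Finset.sum_congr rfl fun m _ => by ring
    simp_rw [h2]
    rw [intervalIntegral.integral_comp_sub_right (fun y => y ^ p) t0, integral_pow]
    simp
  · intro m _
    exact (intervalIntegral.intervalIntegrable_pow m).mul_const _

theorem gsbp_quadrature_Bp {n τ : ℕ}
    (t : Fin n → ℝ) (t0 tf : ℝ) (h : ℝ) (hdef : h = tf - t0) (hh : h ≠ 0)
    (c : Fin n → ℝ) (hc : c = fun i => (t i - t0) / h)
    (w b : Fin n → ℝ)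
    (hw : ∀ k : ℕ, k + 1 ≤ τ →
      w ⬝ᵥ (fun i => t i ^ k) = (tf ^ (k + 1) - t0 ^ (k + 1)) / (k + 1))
    (hb : b = (1 / h) • w) :
    ∀ j : ℕ, 1 ≤ j → j ≤ τ → b ⬝ᵥ (fun i => c i ^ (j - 1)) = 1 / j := by
  intro j hj1 hjτ
  obtain ⟨p, rfl⟩ : ∃ p, j = p + 1 := ⟨j - 1, (Nat.succ_pred_eq_of_pos hj1).symm⟩
  subst hb hc
  have key : w ⬝ᵥ (fun i => (t i - t0) ^ p) = h ^ (p + 1) / (p + 1) := by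
    have expand : ∀ i, (t i - t0) ^ p
        = ∑ m ∈ Finset.range (p + 1), t i ^ m * ((-t0) ^ (p - m) * (p.choose m : ℝ)) := by
      intro i
      rw [sub_eq_add_neg, add_pow]
      exact Finset.sum_congr rfl fun m _ => by ring
    calc w ⬝ᵥ (fun i => (t i - t0) ^ p)
        = ∑ i, ∑ m ∈ Finset.range (p + 1),
            (w i * t i ^ m) * ((-t0) ^ (p - m) * (p.choose m : ℝ)) := by
          simp only [dotProduct, expand, Finset.mul_sum, mul_assoc]
      _ = ∑ m ∈ Finset.range (p + 1),
            (∑ i, w i * t i ^ m) * ((-t0) ^ (p - m) * (p.choose m : ℝ)) := by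
          rw [Finset.sum_comm]
          exact Finset.sum_congr rfl fun m _ => (Finset.sum_mul _ _ _).symm
      _ = ∑ m ∈ Finset.range (p + 1),
            ((tf ^ (m + 1) - t0 ^ (m + 1)) / (m + 1)) * ((-t0) ^ (p - m) * (p.choose m : ℝ)) := by
          refine Finset.sum_congr rfl fun m hm => ?_
          have hm' : m + 1 ≤ τ := by
            have := Finset.mem_range.mp hm
            omega
          rw [show (∑ i, w i * t i ^ m) = w ⬝ᵥ (fun i => t i ^ m) from rfl, hw m hm']
      _ = (tf - t0) ^ (p + 1) / (p + 1) := gsbp_aux_sum p t0 tf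
      _ = h ^ (p + 1) / (p + 1) := by rw [hdef]
  have hp1 : ((p : ℝ) + 1) ≠ 0 := by positivity
  calc ((1 / h) • w) ⬝ᵥ (fun i => ((t i - t0) / h) ^ (p + 1 - 1))
      = (1 / h ^ (p + 1)) * (w ⬝ᵥ (fun i => (t i - t0) ^ p)) := by
        simp only [dotProduct, Nat.add_sub_cancel, Pi.smul_apply, smul_eq_mul, div_pow,
          Finset.mul_sum, pow_succ]
        refine Finset.sum_congr rfl fun i _ => ?_
        field_simp
    _ = 1 / (p + 1 : ℕ) := by
        rw [key]
        field_simp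
        exact Nat.cast_succ p
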